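/- The period-doubling-type morphism σ : a ↦ ba, b ↦ aa is weakly one-sided recognizable on X(σ)⁺ but not one-sided recognizable on X(σ)⁺: the sequence y = a σ(a) σ²(a) ⋯ satisfies y = a σ(y) and has the two distinct σ-representations (ay, 1) and (by, 1). -/

import Mathlib

open scoped Classical

noncomputable section

variable {A B : Type*}

/-- The two-sided shift map. -/
def shiftZ (x : ℤ → A) : ℤ → A := fun n => x (n + 1)

/-- The one-sided shift map. -/
def shiftN (x : ℕ → A) : ℕ → A := fun n => x (n + 1)

/-- The one-sided sequence `x⁺` associated to a two-sided sequence. -/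
def plusSeq (x : ℤ → A) : ℕ → A := fun n => x (n : ℤ)

/-- The one-sided shift space `X⁺` associated to a set of two-sided sequences. -/
def SetPlus (X : Set (ℤ → A)) : Set (ℕ → A) := plusSeq '' X

/-- `X` is a (two-sided) shift space: closed and shift invariant. -/
def IsShiftZ [TopologicalSpace A] (X : Set (ℤ → A)) : Prop :=
  IsClosed X ∧ shiftZ '' X = X

/-- `X` is a one-sided shift space: closed and shift invariant. -/
def IsShiftN [TopologicalSpace A] (X : Set (ℕ → A)) : Prop :=
  IsClosed X ∧ shiftN '' X = X

/-- Image of a word under a morphism given by its values on letters. -/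
def wordImg (σ : A → List B) (w : List A) : List B := (w.map σ).flatten

/-- `σ(x₀ ⋯ x_{n-1})` for a one-sided sequence `x`. -/
def prefixImg (σ : A → List B) (x : ℕ → A) (n : ℕ) : List B :=
  wordImg σ (List.ofFn fun i : Fin n => x i)

/-- `y = σ(x)` for one-sided sequences, with `σ(x)` infinite. -/
def OneSidedImage (σ : A → List B) (x : ℕ → A) (y : ℕ → B) : Prop :=
  (∀ m : ℕ, ∃ n : ℕ, m ≤ (prefixImg σ x n).length) ∧
  ∀ n : ℕ, ∀ i : ℕ, ∀ h : i < (prefixImg σ x n).length, y i = (prefixImg σ x n).get ⟨i, h⟩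

/-- `σ(x_{[-n,m)})` for a two-sided sequence `x`. -/
def segImg (σ : A → List B) (x : ℤ → A) (n m : ℕ) : List B :=
  wordImg σ (List.ofFn fun i : Fin (n + m) => x ((i : ℤ) - (n : ℤ)))

/-- `|σ(x_{[-n,0)})|`. -/
def negLen (σ : A → List B) (x : ℤ → A) (n : ℕ) : ℕ :=
  (wordImg σ (List.ofFn fun i : Fin n => x ((i : ℤ) - (n : ℤ)))).length

/-- `y = σ(x)` for two-sided sequences, with `σ(x)` two-sided infinite
(the letter `x₀` is sent at position `0`). -/
def TwoSidedImage (σ : A → List B) (x : ℤ → A) (y : ℤ → B) : Prop :=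
  (∀ m : ℕ, ∃ n : ℕ, m ≤ (prefixImg σ (plusSeq x) n).length) ∧
  (∀ m : ℕ, ∃ n : ℕ, m ≤ negLen σ x n) ∧
  ∀ n m : ℕ, ∀ i : ℕ, ∀ h : i < (segImg σ x n m).length,
    y ((i : ℤ) - (negLen σ x n : ℤ)) = (segImg σ x n m).get ⟨i, h⟩

/-- `(x,k)` is a σ-representation of the two-sided sequence `y`, with `x ∈ X`. -/
def IsRepZ (σ : A → List B) (X : Set (ℤ → A)) (y : ℤ → B) (x : ℤ → A) (k : ℕ) : Prop :=
  x ∈ X ∧ k < (σ (x 0)).length ∧ ∃ z, TwoSidedImage σ x z ∧ ∀ n : ℤ, y n = z (n + k)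

/-- `σ` is recognizable on `X` at the two-sided point `y`. -/
def RecognizableAtZ (σ : A → List B) (X : Set (ℤ → A)) (y : ℤ → B) : Prop :=
  ∀ x k x' k', IsRepZ σ X y x k → IsRepZ σ X y x' k' → x = x' ∧ k = k'

/-- `σ` is recognizable on `X`. -/
def RecognizableZ (σ : A → List B) (X : Set (ℤ → A)) : Prop :=
  ∀ y : ℤ → B, RecognizableAtZ σ X y

/-- `(x,k)` is a σ-representation of the one-sided sequence `y`, with `x ∈ X`. -/
def IsRepN (σ : A → List B) (X : Set (ℕ → A)) (y : ℕ → B) (x : ℕ → A) (k : ℕ) : Prop :=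
  x ∈ X ∧ k < (σ (x 0)).length ∧ ∃ z, OneSidedImage σ x z ∧ ∀ n : ℕ, y n = z (n + k)

/-- `σ` is one-sided recognizable on `X` at `y`. -/
def RecognizableAtN (σ : A → List B) (X : Set (ℕ → A)) (y : ℕ → B) : Prop :=
  ∀ x k x' k', IsRepN σ X y x k → IsRepN σ X y x' k' → x = x' ∧ k = k'

/-- `σ` is one-sided recognizable on `X`. -/
def RecognizableN (σ : A → List B) (X : Set (ℕ → A)) : Prop :=
  ∀ y : ℕ → B, RecognizableAtN σ X y

/-- The set `C(x)` of cutting points of a two-sided sequence. -/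
def CutSet (σ : A → List B) (x : ℤ → A) : Set ℤ :=
  {m | ∃ n : ℕ, m = ((prefixImg σ (plusSeq x) n).length : ℤ)} ∪
  {m | ∃ n : ℕ, m = -((negLen σ x n : ℤ))}

/-- The set `C⁺(x)` of cutting points of a one-sided sequence. -/
def CutSetPlus (σ : A → List B) (x : ℕ → A) : Set ℕ :=
  {m | ∃ n : ℕ, m = (prefixImg σ x n).length}

/-- Recognizability in the sense of Mossé with scope `N` (two-sided windows). -/
def MosseRec (σ : A → List B) (x : ℤ → A) (y : ℤ → B) (N : ℕ) : Prop :=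
  ∀ i j : ℤ, (∀ d : ℤ, -(N : ℤ) ≤ d → d ≤ N → y (i + d) = y (j + d)) →
    (i ∈ CutSet σ x ↔ j ∈ CutSet σ x)

/-- One-sided recognizability in the sense of Mossé with scope `N`, for a two-sided point. -/
def MosseRecOne (σ : A → List B) (x : ℤ → A) (y : ℤ → B) (N : ℕ) : Prop :=
  ∀ i j : ℤ, (∀ d : ℕ, d < N → y (i + d) = y (j + d)) →
    (i ∈ CutSet σ x ↔ j ∈ CutSet σ x)

/-- One-sided recognizability in the sense of Mossé with scope `N`, for a one-sided point. -/
def MosseRecOneN (σ : A → List B) (x : ℕ → A) (y : ℕ → B) (N : ℕ) : Prop :=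
  ∀ i j : ℕ, (∀ d : ℕ, d < N → y (i + d) = y (j + d)) →
    (i ∈ CutSetPlus σ x ↔ j ∈ CutSetPlus σ x)

/-- The extension of `σ` to words. -/
def substWord (σ : A → List A) : List A → List A := fun w => wordImg σ w

/-- The `n`-th power of the endomorphism `σ`, as a map on letters. -/
def wordPow (σ : A → List A) (n : ℕ) : A → List A := fun a => (substWord σ)^[n] [a]

/-- `w` belongs to the language `L(σ)` of the endomorphism `σ`. -/
def InLangSigma (σ : A → List A) (w : List A) : Prop :=
  ∃ n : ℕ, ∃ a : A, w <:+: (substWord σ)^[n] [a]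

/-- The substitution shift `X(σ)`. -/
def Xsig (σ : A → List A) : Set (ℤ → A) :=
  {x | ∀ k : ℤ, ∀ n : ℕ, InLangSigma σ (List.ofFn fun i : Fin n => x (k + (i : ℤ)))}

/-- The (two-sided) orbit of a two-sided sequence under the shift. -/
def orbitZ (x : ℤ → A) : Set (ℤ → A) := {y | ∃ n : ℤ, ∀ i, y i = x (i + n)}

/-- The forward orbit of a one-sided sequence under the shift. -/
def orbitN (x : ℕ → A) : Set (ℕ → A) := {y | ∃ n : ℕ, ∀ i, y i = x (i + n)}

/-- A two-sided sequence is periodic. -/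
def PeriodicZ (x : ℤ → A) : Prop := ∃ n : ℕ, 1 ≤ n ∧ ∀ i, x (i + n) = x i

/-- A one-sided sequence is periodic. -/
def PeriodicN (x : ℕ → A) : Prop := ∃ n : ℕ, 1 ≤ n ∧ ∀ i, x (i + n) = x i

/-- Minimality of a two-sided shift space. -/
def MinimalZ [TopologicalSpace A] (X : Set (ℤ → A)) : Prop :=
  X.Nonempty ∧ ∀ x ∈ X, X ⊆ closure (orbitZ x)

/-- Minimality of a one-sided shift space. -/
def MinimalN [TopologicalSpace A] (X : Set (ℕ → A)) : Prop :=
  X.Nonempty ∧ ∀ x ∈ X, X ⊆ closure (orbitN x)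

/-- Prepend a letter to a one-sided sequence. -/
def consSeq (a : A) (x : ℕ → A) : ℕ → A := fun i => match i with
  | 0 => a
  | j + 1 => x j

/-- Prepend a word to a one-sided sequence. -/
def prependSeq (w : List A) (x : ℕ → A) : ℕ → A := fun i =>
  if h : i < w.length then w.get ⟨i, h⟩ else x (i - w.length)

/-- `u` is left-special in the one-sided shift `X`. -/
def LeftSpecial (X : Set (ℕ → A)) (u : ℕ → A) : Prop :=
  2 ≤ Nat.card {a : A // consSeq a u ∈ X}

/-- Two two-sided sequences are asymptotically equivalent. -/
def AsympEq (x y : ℤ → A) : Prop := ∃ n m : ℤ, ∀ i : ℕ, x (n + i) = y (m + i)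

/-- `C` is an asymptotic class of `X`. -/
def IsAsympClass (X : Set (ℤ → A)) (C : Set (ℤ → A)) : Prop :=
  ∃ x ∈ X, C = {y ∈ X | AsympEq x y}

/-- An asymptotic class is non-trivial if it is not reduced to a single orbit. -/
def NontrivialClass (C : Set (ℤ → A)) : Prop :=
  ∃ y ∈ C, ∃ z ∈ C, z ∉ orbitZ y

/-- The closure under the shift of `σ(X)`. -/
def imageShiftClosure [TopologicalSpace B] (σ : A → List B) (X : Set (ℤ → A)) :
    Set (ℤ → B) :=
  closure {y | ∃ x ∈ X, ∃ z, TwoSidedImage σ x z ∧ ∃ m : ℤ, ∀ i, y i = z (i + m)}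

/-- The morphism `a ↦ ba, b ↦ aa` on `{a, b}` with `a = false`, `b = true`. -/
def pdm : Bool → List Bool := fun c => if c then [false, false] else [true, false]
-- auxiliary lemmas for stmt13

lemma pdm_len (c : Bool) : (pdm c).length = 2 := by cases c <;> rfl

lemma substWord_append (σ : A → List A) (w₁ w₂ : List A) :
    substWord σ (w₁ ++ w₂) = substWord σ w₁ ++ substWord σ w₂ := by
  simp [substWord, wordImg]

lemma substWord_iter_append (σ : A → List A) (k : ℕ) (w₁ w₂ : List A) :
    (substWord σ)^[k] (w₁ ++ w₂) = (substWord σ)^[k] w₁ ++ (substWord σ)^[k] w₂ := by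
  induction k generalizing w₁ w₂ with
  | zero => rfl
  | succ k ih => simp [Function.iterate_succ_apply, substWord_append, ih]

lemma substWord_cons (c : Bool) (w : List Bool) :
    substWord pdm (c :: w) = pdm c ++ substWord pdm w := by
  simp [substWord, wordImg]

lemma substWord_len (w : List Bool) : (substWord pdm w).length = 2 * w.length := by
  induction w with
  | nil => rfl
  | cons c w ih =>
    rw [substWord_cons]
    simp [pdm_len, ih]; ring

lemma wordPow_len (k : ℕ) (c : Bool) : (wordPow pdm k c).length = 2 ^ k := by
  induction k with
  | zero => rfl
  | succ k ih =>
    have : wordPow pdm (k+1) c = substWord pdm (wordPow pdm k c) := by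
      simp [wordPow, Function.iterate_succ_apply']
    rw [this, substWord_len, ih, pow_succ, Nat.mul_comm]

lemma substWord_getElem_even (w : List Bool) (i : ℕ) (hi : i < w.length)
    (h : 2 * i < (substWord pdm w).length) :
    (substWord pdm w)[2 * i] = !(w[i]) := by
  induction w generalizing i with
  | nil => simp at hi
  | cons c w ih =>
    simp only [substWord_cons] at h ⊢
    cases i with
    | zero =>
      cases c <;> simp [pdm]
    | succ j =>
      have hlen : (pdm c).length = 2 := pdm_len c
      have h2 : 2 * (j + 1) - (pdm c).length = 2 * j := by omega
      rw [List.getElem_append_right (by omega)]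
      simp only [h2]
      have hj : j < w.length := by simpa using hi
      rw [ih j hj (by rw [substWord_len]; omega)]
      simp

lemma substWord_getElem_odd (w : List Bool) (i : ℕ)
    (h : 2 * i + 1 < (substWord pdm w).length) :
    (substWord pdm w)[2 * i + 1] = false := by
  induction w generalizing i with
  | nil => simp [substWord, wordImg] at h
  | cons c w ih =>
    simp only [substWord_cons] at h ⊢
    cases i with
    | zero =>
      cases c <;> simp [pdm]
    | succ j =>
      have hlen : (pdm c).length = 2 := pdm_len c
      have h2 : 2 * (j + 1) + 1 - (pdm c).length = 2 * j + 1 := by omega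
      rw [List.getElem_append_right (by omega)]
      simp only [h2]
      exact ih j (by simp [substWord_len, pdm_len] at h ⊢; omega)

lemma prefixImg_eq (x : ℕ → Bool) (n : ℕ) :
    prefixImg pdm x n = substWord pdm (List.ofFn fun i : Fin n => x i) := rfl

lemma prefixImg_len (x : ℕ → Bool) (n : ℕ) : (prefixImg pdm x n).length = 2 * n := by
  rw [prefixImg_eq, substWord_len, List.length_ofFn]

lemma prefixImg_even (x : ℕ → Bool) (n m : ℕ) (hm : m < n)
    (h : 2 * m < (prefixImg pdm x n).length) :
    (prefixImg pdm x n)[2 * m] = !(x m) := by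
  have h' : 2 * m < (substWord pdm (List.ofFn fun i : Fin n => x i)).length := h
  show (substWord pdm (List.ofFn fun i : Fin n => x i))[2 * m] = !(x m)
  rw [substWord_getElem_even _ m (by simpa using hm) h']
  congr 1
  exact List.getElem_ofFn _

lemma prefixImg_odd (x : ℕ → Bool) (n m : ℕ)
    (h : 2 * m + 1 < (prefixImg pdm x n).length) :
    (prefixImg pdm x n)[2 * m + 1] = false := by
  exact substWord_getElem_odd _ m h

lemma osi_even {x y : ℕ → Bool} (h : OneSidedImage pdm x y) (m : ℕ) :
    y (2 * m) = !(x m) := by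
  have hlen : 2 * m < (prefixImg pdm x (m+1)).length := by rw [prefixImg_len]; omega
  have := h.2 (m+1) (2*m) hlen
  rw [this, List.get_eq_getElem, prefixImg_even x (m+1) m (by omega)]

lemma osi_odd {x y : ℕ → Bool} (h : OneSidedImage pdm x y) (m : ℕ) :
    y (2 * m + 1) = false := by
  have hlen : 2 * m + 1 < (prefixImg pdm x (m+1)).length := by rw [prefixImg_len]; omega
  have := h.2 (m+1) (2*m+1) hlen
  rw [this, List.get_eq_getElem, prefixImg_odd x (m+1) m]

lemma osi_of_blocks {x y : ℕ → Bool} (he : ∀ m, y (2 * m) = !(x m))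
    (ho : ∀ m, y (2 * m + 1) = false) : OneSidedImage pdm x y := by
  constructor
  · intro m; exact ⟨m, by rw [prefixImg_len]; omega⟩
  · intro n i h
    rw [List.get_eq_getElem]
    rcases Nat.mod_two_eq_zero_or_one i with h2 | h2
    · obtain ⟨m, rfl⟩ : ∃ m, i = 2 * m := ⟨i / 2, by omega⟩
      rw [he m, prefixImg_even x n m (by rw [prefixImg_len] at h; omega)]
    · obtain ⟨m, rfl⟩ : ∃ m, i = 2 * m + 1 := ⟨i / 2, by omega⟩
      rw [ho m, prefixImg_odd x n m h]

lemma noBB (w : List Bool) : ¬ [true, true] <:+: substWord pdm w := by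
  induction w with
  | nil =>
    intro h
    have := h.length_le
    simp [substWord, wordImg] at this
  | cons c w ih =>
    rintro ⟨s, t, hst⟩
    rw [substWord_cons] at hst
    have hc : pdm c = [!c, false] := by cases c <;> rfl
    rw [hc] at hst
    match s, hst with
    | [], hst => simp at hst
    | [e], hst => simp at hst
    | e :: f :: s', hst =>
      apply ih
      simp only [List.cons_append, List.append_assoc, List.cons.injEq] at hst
      refine ⟨s', t, ?_⟩
      rw [List.append_assoc]
      exact hst.2.2

lemma not_in_lang_bb : ¬ InLangSigma pdm [true, true] := by
  rintro ⟨n, a, h⟩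
  cases n with
  | zero =>
    have := h.length_le
    simp at this
  | succ n =>
    rw [Function.iterate_succ_apply'] at h
    exact noBB _ h

lemma no_bb_mem {z : ℕ → Bool} (hz : z ∈ SetPlus (Xsig pdm)) (n : ℕ)
    (h1 : z n = true) (h2 : z (n + 1) = true) : False := by
  obtain ⟨x', hx', rfl⟩ := hz
  have hwin := hx' (n : ℤ) 2
  have hw : (List.ofFn fun i : Fin 2 => x' ((n : ℤ) + (i : ℤ))) = [true, true] := by
    have h2' : x' ((n : ℤ) + 1) = true := by
      rw [show (n : ℤ) + 1 = ((n + 1 : ℕ) : ℤ) by push_cast; ring]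
      exact h2
    simp only [List.ofFn_succ, List.ofFn_zero]
    simp
    exact ⟨h1, h2'⟩
  rw [hw] at hwin
  exact not_in_lang_bb hwin

lemma weak_rec : ∀ x ∈ SetPlus (Xsig pdm), ∀ y' : ℕ → Bool, OneSidedImage pdm x y' →
    ∀ z k, IsRepN pdm (SetPlus (Xsig pdm)) y' z k → z = x ∧ k = 0 := by
  intro x _ y' hy z k hrep
  obtain ⟨hzX, hk, w, hw, hyw⟩ := hrep
  rw [pdm_len] at hk
  interval_cases k
  · refine ⟨funext fun n => ?_, rfl⟩
    have e1 := osi_even hy n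
    have e2 := osi_even hw n
    have e3 : y' (2 * n) = w (2 * n) := by simpa using hyw (2 * n)
    have : (!(z n)) = (!(x n)) := by rw [← e1, ← e2, e3]
    simpa using this
  · exfalso
    have hzt : ∀ n, z (n + 1) = true := by
      intro n
      have h1 := osi_odd hy n
      have h2 := hyw (2 * n + 1)
      have h3 := osi_even hw (n + 1)
      rw [show 2 * n + 1 + 1 = 2 * (n + 1) by ring, h3] at h2
      rw [h1] at h2
      simpa using h2.symm
    exact no_bb_mem hzX 1 (hzt 0) (hzt 1)

/-- Limit of even powers of σ applied to `c`. -/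
def limSeq (c : Bool) (n : ℕ) : Bool := (wordPow pdm (2 * (n + 1)) c).getD n false

/-- The left tail: entry at distance `j+1` from the right end of `σ^{2(j+1)}(a)`. -/
def leftSeq (j : ℕ) : Bool :=
  (wordPow pdm (2 * (j + 1)) false).getD (2 ^ (2 * (j + 1)) - (j + 1)) false

lemma wordPow_sq_a (k : ℕ) : wordPow pdm (k + 2) false =
    wordPow pdm k false ++ (wordPow pdm k false ++ (wordPow pdm k true ++ wordPow pdm k false)) := by
  show (substWord pdm)^[k + 2] [false] = _
  rw [Function.iterate_add_apply]
  have h2 : (substWord pdm)^[2] [false] = [false] ++ ([false] ++ ([true] ++ [false])) := by rfl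
  rw [h2, substWord_iter_append, substWord_iter_append, substWord_iter_append]
  rfl

lemma wordPow_sq_b (k : ℕ) : wordPow pdm (k + 2) true =
    wordPow pdm k true ++ (wordPow pdm k false ++ (wordPow pdm k true ++ wordPow pdm k false)) := by
  show (substWord pdm)^[k + 2] [true] = _
  rw [Function.iterate_add_apply]
  have h2 : (substWord pdm)^[2] [true] = [true] ++ ([false] ++ ([true] ++ [false])) := by rfl
  rw [h2, substWord_iter_append, substWord_iter_append, substWord_iter_append]
  rfl

lemma wordPow_prefix_two (k : ℕ) (c : Bool) : wordPow pdm k c <+: wordPow pdm (k + 2) c := by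
  cases c
  · rw [wordPow_sq_a]; exact List.prefix_append _ _
  · rw [wordPow_sq_b]; exact List.prefix_append _ _

lemma wordPow_suffix_two (k : ℕ) (c : Bool) : wordPow pdm k false <:+ wordPow pdm (k + 2) c := by
  have h : wordPow pdm k false <:+
      wordPow pdm k false ++ (wordPow pdm k true ++ wordPow pdm k false) :=
    (List.suffix_append _ _).trans (List.suffix_append _ _)
  cases c
  · rw [wordPow_sq_a]; exact h.trans (List.suffix_append _ _)
  · rw [wordPow_sq_b]; exact h.trans (List.suffix_append _ _)

lemma wordPow_prefix_chain {m m' : ℕ} (h : m ≤ m') (c : Bool) :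
    wordPow pdm (2 * m) c <+: wordPow pdm (2 * m') c := by
  induction m' with
  | zero => have : m = 0 := by omega
            subst this; exact List.prefix_refl _
  | succ m' ih =>
    rcases Nat.lt_or_ge m (m' + 1) with h' | h'
    · have := ih (by omega)
      refine this.trans ?_
      rw [show 2 * (m' + 1) = 2 * m' + 2 by ring]
      exact wordPow_prefix_two _ c
    · have : m = m' + 1 := by omega
      subst this; exact List.prefix_refl _

lemma wordPow_suffix_chain {m m' : ℕ} (h : m ≤ m') :
    wordPow pdm (2 * m) false <:+ wordPow pdm (2 * m') false := by
  induction m' with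
  | zero => have : m = 0 := by omega
            subst this; exact List.suffix_refl _
  | succ m' ih =>
    rcases Nat.lt_or_ge m (m' + 1) with h' | h'
    · have := ih (by omega)
      refine this.trans ?_
      rw [show 2 * (m' + 1) = 2 * m' + 2 by ring]
      exact wordPow_suffix_two _ false
    · have : m = m' + 1 := by omega
      subst this; exact List.suffix_refl _

lemma self_lt_pow (n m : ℕ) (h : n + 1 ≤ 2 * m) : n < 2 ^ (2 * m) := by
  calc n < 2 ^ n := Nat.lt_two_pow_self
    _ ≤ 2 ^ (2 * m) := by
        apply Nat.pow_le_pow_right (by norm_num)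
        omega

lemma limSeq_stable (c : Bool) (n m : ℕ) (h : n < 2 ^ (2 * m)) :
    limSeq c n = (wordPow pdm (2 * m) c).getD n false := by
  have hn : n < 2 ^ (2 * (n + 1)) := self_lt_pow n (n + 1) (by omega)
  unfold limSeq
  rcases le_total (n + 1) m with hm | hm
  · have hp := wordPow_prefix_chain hm c
    rw [List.getD_eq_getElem _ _ (by rw [wordPow_len]; exact hn),
        List.getD_eq_getElem _ _ (by rw [wordPow_len]; exact h)]
    exact hp.getElem _
  · have hp := wordPow_prefix_chain hm c
    rw [List.getD_eq_getElem _ _ (by rw [wordPow_len]; exact hn),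
        List.getD_eq_getElem _ _ (by rw [wordPow_len]; exact h)]
    exact (hp.getElem _).symm

lemma suffix_getD_right {l l' : List Bool} (h : l <:+ l') (j : ℕ) (hj : j < l.length) :
    l.getD (l.length - (j + 1)) false = l'.getD (l'.length - (j + 1)) false := by
  obtain ⟨s, rfl⟩ := h
  have hl : (s ++ l).length = s.length + l.length := List.length_append
  rw [List.getD_eq_getElem _ _ (by omega), List.getD_eq_getElem _ _ (by omega)]
  have hidx : (s ++ l).length - (j + 1) = s.length + (l.length - (j + 1)) := by omega
  simp only [hidx]
  rw [List.getElem_append_right (by omega)]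
  congr 1
  omega

lemma leftSeq_stable (j m : ℕ) (h : j < 2 ^ (2 * m)) :
    leftSeq j = (wordPow pdm (2 * m) false).getD (2 ^ (2 * m) - (j + 1)) false := by
  have hj : j < 2 ^ (2 * (j + 1)) := self_lt_pow j (j + 1) (by omega)
  unfold leftSeq
  rcases le_total (j + 1) m with hm | hm
  · have hs := wordPow_suffix_chain hm
    have := suffix_getD_right hs j (by rw [wordPow_len]; exact hj)
    rwa [wordPow_len, wordPow_len] at this
  · have hs := wordPow_suffix_chain hm
    have := suffix_getD_right hs j (by rw [wordPow_len]; exact h)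
    rw [wordPow_len, wordPow_len] at this
    exact this.symm

lemma wordPow_odd_true (m : ℕ) : wordPow pdm (2 * m + 3) true =
    wordPow pdm (2 * m + 2) false ++ wordPow pdm (2 * m + 2) false := by
  show (substWord pdm)^[2 * m + 3] [true] = _
  rw [show 2 * m + 3 = (2 * m + 2) + 1 by ring, Function.iterate_add_apply]
  have h1 : (substWord pdm)^[1] [true] = [false] ++ [false] := rfl
  rw [h1, substWord_iter_append]
  rfl

lemma wordPow_odd_false (m : ℕ) : wordPow pdm (2 * m + 3) false =
    wordPow pdm (2 * m + 2) true ++ wordPow pdm (2 * m + 2) false := by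
  show (substWord pdm)^[2 * m + 3] [false] = _
  rw [show 2 * m + 3 = (2 * m + 2) + 1 by ring, Function.iterate_add_apply]
  have h1 : (substWord pdm)^[1] [false] = [true] ++ [false] := rfl
  rw [h1, substWord_iter_append]
  rfl

lemma wordPow_step_true (m : ℕ) : wordPow pdm (2 * (m + 2)) true =
    substWord pdm (wordPow pdm (2 * m + 3) true) := by
  rw [show 2 * (m + 2) = (2 * m + 3) + 1 by ring]
  show (substWord pdm)^[(2 * m + 3) + 1] [true] = _
  rw [Function.iterate_succ_apply']
  rfl

lemma wordPow_step_false (m : ℕ) : wordPow pdm (2 * (m + 2)) false =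
    substWord pdm (wordPow pdm (2 * m + 3) false) := by
  rw [show 2 * (m + 2) = (2 * m + 3) + 1 by ring]
  show (substWord pdm)^[(2 * m + 3) + 1] [false] = _
  rw [Function.iterate_succ_apply']
  rfl

lemma m_lt_pow (m : ℕ) : m < 2 ^ (2 * m + 2) := by
  have := self_lt_pow m (m + 1) (by omega)
  rwa [show 2 * (m + 1) = 2 * m + 2 by ring] at this

lemma v_block_even (m : ℕ) : limSeq true (2 * m) = !(limSeq false m) := by
  have hb1 : 2 * m < 2 ^ (2 * (m + 2)) := self_lt_pow _ _ (by omega)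
  rw [limSeq_stable true (2 * m) (m + 2) hb1, wordPow_step_true, wordPow_odd_true]
  set P := wordPow pdm (2 * m + 2) false with hP
  have hPlen : P.length = 2 ^ (2 * m + 2) := wordPow_len _ _
  have hm : m < 2 ^ (2 * m + 2) := m_lt_pow m
  have hlen2 : (substWord pdm (P ++ P)).length = 2 * (P ++ P).length := substWord_len _
  have hmm : m < (P ++ P).length := by simp [hPlen]; omega
  have hgd : 2 * m < (substWord pdm (P ++ P)).length := by rw [hlen2]; omega
  rw [List.getD_eq_getElem _ _ hgd, substWord_getElem_even _ m hmm]
  congr 1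
  rw [List.getElem_append_left (by rw [hPlen]; exact hm)]
  rw [limSeq_stable false m (m + 1) (by rwa [show 2 * (m + 1) = 2 * m + 2 by ring])]
  rw [List.getD_eq_getElem _ _ (by rw [wordPow_len, show 2 * (m + 1) = 2 * m + 2 by ring]; exact hm)]
  simp only [hP, show 2 * m + 2 = 2 * (m + 1) by ring]

lemma v_block_odd (m : ℕ) : limSeq true (2 * m + 1) = false := by
  have hb1 : 2 * m + 1 < 2 ^ (2 * (m + 2)) := self_lt_pow _ _ (by omega)
  rw [limSeq_stable true (2 * m + 1) (m + 2) hb1, wordPow_step_true]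
  set W := wordPow pdm (2 * m + 3) true with hW
  have hgd : 2 * m + 1 < (substWord pdm W).length := by
    rw [substWord_len, wordPow_len]
    have := self_lt_pow (2 * m + 1) (m + 2) (by omega)
    rw [show 2 * (m + 2) = (2 * m + 3) + 1 by ring, pow_succ] at this
    omega
  rw [List.getD_eq_getElem _ _ hgd, substWord_getElem_odd _ m hgd]

lemma u_block_even (m : ℕ) : limSeq false (2 * m) = !(limSeq true m) := by
  have hb1 : 2 * m < 2 ^ (2 * (m + 2)) := self_lt_pow _ _ (by omega)
  rw [limSeq_stable false (2 * m) (m + 2) hb1, wordPow_step_false, wordPow_odd_false]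
  set P := wordPow pdm (2 * m + 2) true with hP
  set Q := wordPow pdm (2 * m + 2) false with hQ
  have hPlen : P.length = 2 ^ (2 * m + 2) := wordPow_len _ _
  have hQlen : Q.length = 2 ^ (2 * m + 2) := wordPow_len _ _
  have hm : m < 2 ^ (2 * m + 2) := m_lt_pow m
  have hlen2 : (substWord pdm (P ++ Q)).length = 2 * (P ++ Q).length := substWord_len _
  have hmm : m < (P ++ Q).length := by simp [hPlen, hQlen]; omega
  have hgd : 2 * m < (substWord pdm (P ++ Q)).length := by rw [hlen2]; omega
  rw [List.getD_eq_getElem _ _ hgd, substWord_getElem_even _ m hmm]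
  congr 1
  rw [List.getElem_append_left (by rw [hPlen]; exact hm)]
  rw [limSeq_stable true m (m + 1) (by rwa [show 2 * (m + 1) = 2 * m + 2 by ring])]
  rw [List.getD_eq_getElem _ _ (by rw [wordPow_len, show 2 * (m + 1) = 2 * m + 2 by ring]; exact hm)]
  simp only [hP, show 2 * m + 2 = 2 * (m + 1) by ring]

lemma u_block_odd (m : ℕ) : limSeq false (2 * m + 1) = false := by
  have hb1 : 2 * m + 1 < 2 ^ (2 * (m + 2)) := self_lt_pow _ _ (by omega)
  rw [limSeq_stable false (2 * m + 1) (m + 2) hb1, wordPow_step_false]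
  set W := wordPow pdm (2 * m + 3) false with hW
  have hgd : 2 * m + 1 < (substWord pdm W).length := by
    rw [substWord_len, wordPow_len]
    have := self_lt_pow (2 * m + 1) (m + 2) (by omega)
    rw [show 2 * (m + 2) = (2 * m + 3) + 1 by ring, pow_succ] at this
    omega
  rw [List.getD_eq_getElem _ _ hgd, substWord_getElem_odd _ m hgd]

lemma uv_eq : ∀ n : ℕ, limSeq false (n + 1) = limSeq true (n + 1) := by
  intro n
  induction n using Nat.strong_induction_on with
  | _ n ih =>
    rcases Nat.mod_two_eq_zero_or_one (n + 1) with h2 | h2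
    · obtain ⟨m, hm⟩ : ∃ m, n + 1 = 2 * (m + 1) := ⟨(n + 1) / 2 - 1, by omega⟩
      rw [hm, u_block_even, v_block_even, ih m (by omega)]
    · obtain ⟨m, hm⟩ : ∃ m, n + 1 = 2 * m + 1 := ⟨n / 2, by omega⟩
      rw [hm, u_block_odd, v_block_odd]

lemma u_zero : limSeq false 0 = false := by
  show (wordPow pdm (2 * (0 + 1)) false).getD 0 false = false
  rw [show 2 * (0 + 1) = 0 + 2 by ring, wordPow_sq_a]
  rfl

lemma u_one : limSeq false 1 = false := u_block_odd 0

lemma v_zero : limSeq true 0 = true := by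
  show (wordPow pdm (2 * (0 + 1)) true).getD 0 false = true
  rw [show 2 * (0 + 1) = 0 + 2 by ring, wordPow_sq_b]
  rfl

/-- Two-sided extension: right part the fixed point `limSeq c`, left part `leftSeq`. -/
def Xside (c : Bool) : ℤ → Bool := fun n =>
  if 0 ≤ n then limSeq c n.toNat else leftSeq (-(n + 1)).toNat

lemma infix_helper {l w : List Bool} (o : ℕ) (ho : o + l.length ≤ w.length)
    (h : ∀ i, i < l.length → l.getD i false = w.getD (o + i) false) : l <:+: w := by
  have hl : l = (w.drop o).take l.length := by
    apply List.ext_getElem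
    · simp; omega
    · intro i h1 h2
      rw [List.getElem_take, List.getElem_drop]
      have := h i h1
      rwa [List.getD_eq_getElem _ _ h1, List.getD_eq_getElem _ _ (by omega)] at this
  rw [hl]
  exact (List.take_prefix _ _).isInfix.trans (List.drop_suffix _ _).isInfix

lemma getD_append_left' {W V : List Bool} {i : ℕ} (h : i < W.length) :
    (W ++ V).getD i false = W.getD i false := by
  rw [List.getD_eq_getElem _ _ (by simp; omega), List.getD_eq_getElem _ _ h,
    List.getElem_append_left h]

lemma getD_append_right' {W V : List Bool} {i : ℕ} (h : W.length ≤ i)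
    (h2 : i < W.length + V.length) :
    (W ++ V).getD i false = V.getD (i - W.length) false := by
  rw [List.getD_eq_getElem _ _ (by simp; omega), List.getD_eq_getElem _ _ (by omega),
    List.getElem_append_right h]

lemma Xside_mem (c : Bool) : Xside c ∈ Xsig pdm := by
  intro k n
  set R := k.natAbs + n + 1 with hRdef
  have hRN : R < 2 ^ (2 * R) := self_lt_pow R R (by omega)
  set N := 2 ^ (2 * R) with hNdef
  set W := wordPow pdm (2 * R) false with hWdef
  have hWlen : W.length = N := wordPow_len _ _
  have hVlen : (wordPow pdm (2 * R) c).length = N := wordPow_len _ _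
  have hkN : k.natAbs + n < N := by omega
  have hinf : W ++ wordPow pdm (2 * R) c <:+: wordPow pdm (2 * R + 2) false := by
    cases c
    · exact ⟨[], wordPow pdm (2 * R) true ++ wordPow pdm (2 * R) false, by
        rw [show 2 * R + 2 = 2 * R + 2 from rfl, wordPow_sq_a]
        simp [List.append_assoc, hWdef]⟩
    · exact ⟨W, W, by rw [wordPow_sq_a]; simp [List.append_assoc, hWdef]⟩
  refine ⟨2 * R + 2, false, List.IsInfix.trans ?_ hinf⟩
  set o := (k + (N : ℤ)).toNat with hodef
  apply infix_helper o
  · simp only [List.length_append, List.length_ofFn, hWlen, hVlen]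
    omega
  · intro i hi
    rw [List.length_ofFn] at hi
    rw [List.getD_eq_getElem _ _ (by rw [List.length_ofFn]; exact hi), List.getElem_ofFn]
    by_cases hpos : (0 : ℤ) ≤ k + i
    · have hj : ((k + (i : ℤ)).toNat) < N := by omega
      have ho : o + i = W.length + (k + (i : ℤ)).toNat := by omega
      rw [ho, getD_append_right' (by omega) (by omega)]
      rw [show W.length + (k + (i : ℤ)).toNat - W.length = (k + (i : ℤ)).toNat by omega]
      show Xside c (k + i) = _
      rw [Xside, if_pos hpos]
      rw [limSeq_stable c _ R hj]
    · have hj1 : ((-(k + (i : ℤ) + 1)).toNat) + 1 ≤ k.natAbs := by omega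
      have hj : ((-(k + (i : ℤ) + 1)).toNat) < N := by omega
      have ho : o + i = N - ((-(k + (i : ℤ) + 1)).toNat + 1) := by omega
      rw [ho, getD_append_left' (by omega)]
      show Xside c (k + i) = _
      rw [Xside, if_neg (by omega)]
      rw [leftSeq_stable _ R hj]

lemma plus_Xside (c : Bool) : plusSeq (Xside c) = limSeq c := by
  funext n
  show Xside c (n : ℤ) = limSeq c n
  rw [Xside, if_pos (by omega)]
  congr 1

lemma limSeq_memPlus (c : Bool) : limSeq c ∈ SetPlus (Xsig pdm) :=
  ⟨Xside c, Xside_mem c, plus_Xside c⟩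

theorem stmt13 :
    (∀ x ∈ SetPlus (Xsig pdm), ∀ y' : ℕ → Bool, OneSidedImage pdm x y' →
      ∀ z k, IsRepN pdm (SetPlus (Xsig pdm)) y' z k → z = x ∧ k = 0) ∧
    (∃ y : ℕ → Bool,
      (∃ z, OneSidedImage pdm y z ∧ y = consSeq false z) ∧
      IsRepN pdm (SetPlus (Xsig pdm)) y (consSeq false y) 1 ∧
      IsRepN pdm (SetPlus (Xsig pdm)) y (consSeq true y) 1 ∧
      consSeq false y ≠ consSeq true y) ∧
    ¬ RecognizableN pdm (SetPlus (Xsig pdm)) := by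
  set y : ℕ → Bool := fun n => limSeq false (n + 1) with hy
  have hcf : consSeq false y = limSeq false := by
    funext i
    cases i with
    | zero => exact u_zero.symm
    | succ j => rfl
  have hct : consSeq true y = limSeq true := by
    funext i
    cases i with
    | zero => exact v_zero.symm
    | succ j => exact uv_eq j
  have hOSI_uv : OneSidedImage pdm (limSeq false) (limSeq true) :=
    osi_of_blocks v_block_even v_block_odd
  have hOSI_vu : OneSidedImage pdm (limSeq true) (limSeq false) :=
    osi_of_blocks u_block_even u_block_odd
  have hrepA : IsRepN pdm (SetPlus (Xsig pdm)) y (consSeq false y) 1 := by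
    rw [hcf]
    refine ⟨limSeq_memPlus false, by rw [pdm_len]; omega, limSeq true, hOSI_uv, fun n => ?_⟩
    exact uv_eq n
  have hrepB : IsRepN pdm (SetPlus (Xsig pdm)) y (consSeq true y) 1 := by
    rw [hct]
    exact ⟨limSeq_memPlus true, by rw [pdm_len]; omega, limSeq false, hOSI_vu, fun n => rfl⟩
  have hne : consSeq false y ≠ consSeq true y := by
    intro h
    have h0 : (false : Bool) = true := congrFun h 0
    simp at h0
  refine ⟨weak_rec, ⟨y, ⟨fun n => limSeq false (n + 2), ?_, ?_⟩, hrepA, hrepB, hne⟩, ?_⟩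
  · apply osi_of_blocks
    · intro m
      show limSeq false (2 * m + 2) = !(limSeq false (m + 1))
      rw [show 2 * m + 2 = 2 * (m + 1) by ring, u_block_even, ← uv_eq m]
    · intro m
      show limSeq false (2 * m + 3) = false
      rw [show 2 * m + 3 = 2 * (m + 1) + 1 by ring]
      exact u_block_odd (m + 1)
  · funext i
    cases i with
    | zero => exact u_one
    | succ j => rfl
  · intro hrec
    exact hne ((hrec y (consSeq false y) 1 (consSeq true y) 1 hrepA hrepB).1)
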